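/- Let $N$ be a real symmetric $3\times 3$ matrix of the form $N = \begin{pmatrix} -B_2-B_3 & B_3 & B_2 \\ B_3 & -B_3-B_1 & B_1 \\ B_2 & B_1 & -B_1-B_2 \end{pmatrix}$. If $B_1 + B_2 + B_3 < 0$ and $B_1 B_2 + B_2 B_3 + B_3 B_1 > 0$, then $N$ has eigenvalue $0$ with eigenvector $(1,1,1)$ and its other two eigenvalues are positive. -/
import Mathlib


theorem eigenvalues_of_zero_row_sum_matrix
    (B1 B2 B3 : ℝ)
    (hsum : B1 + B2 + B3 < 0)
    (hprod : 0 < B1 * B2 + B2 * B3 + B3 * B1)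
    (N : Matrix (Fin 3) (Fin 3) ℝ)
    (hN : N = Matrix.of ![![-B2 - B3, B3, B2], ![B3, -B3 - B1, B1], ![B2, B1, -B1 - B2]]) :
    N.mulVec ![1, 1, 1] = 0 ∧
    ∀ μ : ℝ, μ ∈ spectrum ℝ N → μ ≠ 0 → 0 < μ := by
  subst hN
  constructor
  · funext i
    fin_cases i <;>
      simp [Matrix.mulVec, dotProduct, Fin.sum_univ_three] <;> ring
  · intro μ hμ hμ0
    rw [spectrum.mem_iff, Matrix.isUnit_iff_isUnit_det, isUnit_iff_ne_zero, not_not] at hμ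
    rw [Matrix.det_fin_three] at hμ
    simp [Matrix.algebraMap_matrix_apply, Matrix.one_apply] at hμ
    have key : μ ^ 2 + 2 * (B1 + B2 + B3) * μ + 3 * (B1 * B2 + B2 * B3 + B3 * B1) = 0 := by
      have : μ * (μ ^ 2 + 2 * (B1 + B2 + B3) * μ + 3 * (B1 * B2 + B2 * B3 + B3 * B1)) = 0 := by
        linear_combination hμ
      rcases mul_eq_zero.mp this with h | h
      · exact absurd h hμ0
      · exact h
    by_contra hle
    push_neg at hle
    have hlt : μ < 0 := lt_of_le_of_ne hle hμ0
    nlinarith [mul_pos (neg_pos.mpr hsum) (neg_pos.mpr hlt)]
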